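/- Let v* be the unique global minimizer of f(v) := F(v) + ½‖v‖² and let ξ := f(v*). Then: (i) ξ ≤ 0; (ii) ξ = 0 if and only if v* = 0, and these hold if and only if there is no v ∈ ℝⁿ with F(v) < 0; (iii) if ξ < 0, then v* ≠ 0 and F(v*) < 0. -/

import Mathlib

open RealInnerProductSpace

/-- Componentwise absolute value `|v| = (|v₁|, …, |vₙ|)` of a vector in `ℝⁿ`. -/
noncomputable def vabs {n : ℕ} (v : EuclideanSpace ℝ (Fin n)) : EuclideanSpace ℝ (Fin n) :=
  WithLp.toLp 2 (fun j => |v j|)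

/-- Maximum of finitely many reals indexed by a nonempty `Fin m`. -/
noncomputable def fsup {m : ℕ} (hm : 0 < m) (f : Fin m → ℝ) : ℝ :=
  Finset.univ.sup' (Finset.univ_nonempty_iff.mpr (Fin.pos_iff_nonempty.mp hm)) f

/-- Upper endpoint function `ḡᵢ(v) = ½⟨aᵢ + bᵢ, v⟩ + ½⟨bᵢ − aᵢ, |v|⟩`. -/
noncomputable def gbar {n m : ℕ} (a b : Fin m → EuclideanSpace ℝ (Fin n)) (i : Fin m)
    (v : EuclideanSpace ℝ (Fin n)) : ℝ :=
  (1 / 2) * ⟪a i + b i, v⟫ + (1 / 2) * ⟪b i - a i, vabs v⟫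

/-- `F(v) = max_{1 ≤ i ≤ m} ḡᵢ(v)`. -/
noncomputable def Fmax {n m : ℕ} (hm : 0 < m) (a b : Fin m → EuclideanSpace ℝ (Fin n))
    (v : EuclideanSpace ℝ (Fin n)) : ℝ :=
  fsup hm fun i => gbar a b i v

lemma vabs_zero {n : ℕ} : vabs (0 : EuclideanSpace ℝ (Fin n)) = 0 := by
  ext j; simp [vabs]

lemma vabs_smul {n : ℕ} (t : ℝ) (ht : 0 ≤ t) (v : EuclideanSpace ℝ (Fin n)) :
    vabs (t • v) = t • vabs v := by
  ext j
  simp [vabs, PiLp.smul_apply, abs_mul, abs_of_nonneg ht, smul_eq_mul]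

lemma gbar_zero {n m : ℕ} (a b : Fin m → EuclideanSpace ℝ (Fin n)) (i : Fin m) :
    gbar a b i 0 = 0 := by
  simp [gbar, vabs_zero]

lemma gbar_smul {n m : ℕ} (a b : Fin m → EuclideanSpace ℝ (Fin n)) (i : Fin m)
    (t : ℝ) (ht : 0 ≤ t) (v : EuclideanSpace ℝ (Fin n)) :
    gbar a b i (t • v) = t * gbar a b i v := by
  rw [gbar, gbar, vabs_smul t ht, real_inner_smul_right, real_inner_smul_right]
  ring

lemma Fmax_zero {n m : ℕ} (hm : 0 < m) (a b : Fin m → EuclideanSpace ℝ (Fin n)) :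
    Fmax hm a b 0 = 0 := by
  simp [Fmax, fsup, gbar_zero]

lemma Fmax_smul {n m : ℕ} (hm : 0 < m) (a b : Fin m → EuclideanSpace ℝ (Fin n))
    (t : ℝ) (ht : 0 ≤ t) (v : EuclideanSpace ℝ (Fin n)) :
    Fmax hm a b (t • v) = t * Fmax hm a b v := by
  unfold Fmax fsup
  have h := Finset.comp_sup'_eq_sup'_comp
    (Finset.univ_nonempty_iff.mpr (Fin.pos_iff_nonempty.mp hm))
    (f := fun i => gbar a b i v) (fun x : ℝ => t * x)
    (fun x y => mul_max_of_nonneg x y ht)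
  simp only [Function.comp] at h
  rw [show (fun i => gbar a b i (t • v)) = fun i => t * gbar a b i v from
    funext fun i => gbar_smul a b i t ht v]
  exact h.symm

lemma neg_dir {n m : ℕ} (hm : 0 < m) (a b : Fin m → EuclideanSpace ℝ (Fin n))
    (v : EuclideanSpace ℝ (Fin n)) (hv : Fmax hm a b v < 0) :
    ∃ w : EuclideanSpace ℝ (Fin n), Fmax hm a b w + (1 / 2) * ‖w‖ ^ 2 < 0 := by
  set F := Fmax hm a b v with hF
  set t : ℝ := -F / (‖v‖ ^ 2 + 1) with htdef
  have hn : (0:ℝ) < ‖v‖ ^ 2 + 1 := by positivity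
  have ht : 0 < t := div_pos (by linarith) hn
  refine ⟨t • v, ?_⟩
  rw [Fmax_smul hm a b t ht.le v, norm_smul]
  have htv : t * ‖v‖ ^ 2 ≤ -F := by
    rw [htdef, div_mul_eq_mul_div, div_le_iff₀ hn]
    nlinarith [sq_nonneg ‖v‖]
  have : ‖t‖ = t := abs_of_pos ht
  rw [this]
  nlinarith

/-- Descent-direction-finding lemma, parts (i)–(iii): with `v*` the global minimizer
of `f(v) = F(v) + ½‖v‖²` and `ξ = f(v*)`, one has `ξ ≤ 0`; `ξ = 0` iff `v* = 0` iff
there is no `v` with `F(v) < 0`; and if `ξ < 0` then `v* ≠ 0` and `F(v*) < 0`. -/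
theorem descent_direction_lemma {n m : ℕ} (hm : 0 < m)
    (a b : Fin m → EuclideanSpace ℝ (Fin n)) (hab : ∀ i j, a i j ≤ b i j)
    (vstar : EuclideanSpace ℝ (Fin n))
    (hmin : ∀ w, Fmax hm a b vstar + (1 / 2) * ‖vstar‖ ^ 2 ≤
      Fmax hm a b w + (1 / 2) * ‖w‖ ^ 2) :
    Fmax hm a b vstar + (1 / 2) * ‖vstar‖ ^ 2 ≤ 0 ∧
    (Fmax hm a b vstar + (1 / 2) * ‖vstar‖ ^ 2 = 0 ↔ vstar = 0) ∧
    (Fmax hm a b vstar + (1 / 2) * ‖vstar‖ ^ 2 = 0 ↔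
      ¬ ∃ v : EuclideanSpace ℝ (Fin n), Fmax hm a b v < 0) ∧
    (Fmax hm a b vstar + (1 / 2) * ‖vstar‖ ^ 2 < 0 →
      vstar ≠ 0 ∧ Fmax hm a b vstar < 0) := by
  have hxi0 : Fmax hm a b vstar + (1 / 2) * ‖vstar‖ ^ 2 ≤ 0 := by
    have := hmin 0
    simpa [Fmax_zero] using this
  have hC : Fmax hm a b vstar + (1 / 2) * ‖vstar‖ ^ 2 = 0 ↔
      ¬ ∃ v : EuclideanSpace ℝ (Fin n), Fmax hm a b v < 0 := by
    constructor
    · rintro h ⟨v, hv⟩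
      obtain ⟨w, hw⟩ := neg_dir hm a b v hv
      have := hmin w
      linarith
    · intro h
      have h1 : 0 ≤ Fmax hm a b vstar := by
        by_contra hc
        exact h ⟨vstar, by linarith⟩
      nlinarith [sq_nonneg ‖vstar‖]
  have hB : Fmax hm a b vstar + (1 / 2) * ‖vstar‖ ^ 2 = 0 ↔ vstar = 0 := by
    constructor
    · intro h
      by_contra hne
      have hn0 : 0 < ‖vstar‖ := norm_pos_iff.mpr hne
      have hnorm : 0 < ‖vstar‖ ^ 2 := by positivity
      have hFneg : Fmax hm a b vstar < 0 := by linarith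
      exact (hC.mp h) ⟨vstar, hFneg⟩
    · intro h; subst h; simp [Fmax_zero]
  refine ⟨hxi0, hB, hC, fun h => ⟨?_, ?_⟩⟩
  · intro h0; rw [hB.mpr h0] at h; exact absurd h (lt_irrefl 0)
  · nlinarith [sq_nonneg ‖vstar‖]
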